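/- Let β ∈ (β̄, μ_1) and let C′(β) denote the entrywise derivative of the matrix-valued function C at β. Then for every vector u ∈ ℝⁿ orthogonal to b_1(β) one has ⟨C′(β)·u, u⟩ = f′(β)·|u|², where ⟨·,·⟩ and |·| are the standard inner product and norm on ℝⁿ. -/

import Mathlib

/-- Let `β ∈ (β̄, μ 0)` and let `C'` be the entrywise derivative at `β` of the
matrix-valued function `C(·) = I + (2/g(·)) D(·)`, and let `f'` be the
derivative of `f(·) = 1 + 2/g(·)` at `β`. Then for every `u ∈ ℝⁿ` orthogonal
to `b₁(β)` one has `⟨C'(β) u, u⟩ = f'(β) |u|²`. -/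
theorem stmt_13 (n : ℕ) (hn : 2 ≤ n) (μ : Fin n → ℝ) (hμpos : ∀ k, 0 < μ k)
    (hμmono : Monotone μ) (g : ℝ → ℝ)
    (hg : ∀ β : ℝ, g β = 1 + β * ∑ k, 1 / (μ k - β))
    (βbar : ℝ) (hβbar : βbar < 0) (hβbarzero : g βbar = 0)
    (β : ℝ) (hβ : β ∈ Set.Ioo βbar (μ ⟨0, by omega⟩))
    (C : ℝ → Matrix (Fin n) (Fin n) ℝ)
    (hC : ∀ b ∈ Set.Ioo βbar (μ ⟨0, by omega⟩), ∀ i j, C b i j =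
      (if i = j then 1 else 0) +
        (2 / g b) * (if i = j then μ i / (μ i - b)
          else b / Real.sqrt ((μ i - b) * (μ j - b))))
    (f : ℝ → ℝ) (hf : ∀ b : ℝ, f b = 1 + 2 / g b)
    (C' : Matrix (Fin n) (Fin n) ℝ)
    (hC' : ∀ i j, HasDerivAt (fun b => C b i j) (C' i j) β)
    (f' : ℝ) (hf' : HasDerivAt f f' β)
    (b1 : Fin n → ℝ) (hb1 : ∀ j, b1 j = (Real.sqrt (μ j - β))⁻¹) :
    ∀ u : Fin n → ℝ, ∑ k, u k * b1 k = 0 →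
      ∑ i, C'.mulVec u i * u i = f' * ∑ i, u i ^ 2 := by
  intro u hu
  have hI : Set.Ioo βbar (μ ⟨0, by omega⟩) ∈ nhds β := isOpen_Ioo.mem_nhds hβ
  have hpos : ∀ b ∈ Set.Ioo βbar (μ ⟨0, by omega⟩), ∀ i : Fin n, 0 < μ i - b := by
    intro b hb i
    have h0 : μ ⟨0, by omega⟩ ≤ μ i := hμmono (by simp [Fin.le_def])
    have := hb.2
    linarith
  -- entrywise closed form
  have hCfor : ∀ b ∈ Set.Ioo βbar (μ ⟨0, by omega⟩), ∀ i j, C b i j =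
      f b * (if i = j then 1 else 0) +
        (f b - 1) * b * ((Real.sqrt (μ i - b))⁻¹ * (Real.sqrt (μ j - b))⁻¹) := by
    intro b hb i j
    have hi := hpos b hb i
    have hj := hpos b hb j
    rw [hC b hb i j, hf b]
    by_cases h : i = j
    · subst h
      simp only [eq_self_iff_true, if_true]
      have hs : (Real.sqrt (μ i - b))⁻¹ * (Real.sqrt (μ i - b))⁻¹ = (μ i - b)⁻¹ := by
        rw [← mul_inv, Real.mul_self_sqrt hi.le]
      have hmu : μ i / (μ i - b) = 1 + b * (μ i - b)⁻¹ := by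
        field_simp
        ring
      rw [hs, hmu]
      ring
    · simp only [if_neg h]
      have hd : b / (Real.sqrt (μ i - b) * Real.sqrt (μ j - b)) =
          b * ((Real.sqrt (μ i - b))⁻¹ * (Real.sqrt (μ j - b))⁻¹) := by
        rw [← mul_inv, div_eq_mul_inv]
      rw [Real.sqrt_mul hi.le, hd]
      ring
  -- derivative of each gamma
  have hγd : ∀ i : Fin n, ∃ c : ℝ, HasDerivAt (fun b => (Real.sqrt (μ i - b))⁻¹) c β := by
    intro i
    have hi := hpos β hβ i
    have h1 : HasDerivAt (fun b : ℝ => μ i - b) (-1) β := by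
      simpa using (hasDerivAt_id β).const_sub (μ i)
    have h2 : HasDerivAt (fun b => Real.sqrt (μ i - b))
        (1 / (2 * Real.sqrt (μ i - β)) * (-1)) β :=
      (Real.hasDerivAt_sqrt hi.ne').comp β h1
    exact ⟨_, h2.inv (Real.sqrt_pos.mpr hi).ne'⟩
  choose c hc using hγd
  have hr : HasDerivAt (fun b => ∑ i, u i * (Real.sqrt (μ i - b))⁻¹) (∑ i, u i * c i) β :=
    HasDerivAt.fun_sum (fun i _ => (hc i).const_mul (u i))
  have hr0 : ∑ i, u i * (Real.sqrt (μ i - β))⁻¹ = 0 := by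
    rw [← hu]
    exact Finset.sum_congr rfl fun i _ => by rw [hb1 i]
  -- derivative of the correction term is 0
  have hf1 : HasDerivAt (fun b => (f b - 1) * b) (f' * β + (f β - 1) * 1) β :=
    (hf'.sub_const 1).mul (hasDerivAt_id β)
  have hr2 : HasDerivAt (fun b => (∑ i, u i * (Real.sqrt (μ i - b))⁻¹) ^ 2)
      (2 * (∑ i, u i * (Real.sqrt (μ i - β))⁻¹) ^ 1 * (∑ i, u i * c i)) β := hr.pow 2
  have hφ : HasDerivAt
      (fun b => (f b - 1) * b * (∑ i, u i * (Real.sqrt (μ i - b))⁻¹) ^ 2) 0 β := by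
    have := hf1.fun_mul hr2
    simpa [hr0] using this
  -- derivative of the full quadratic form via the closed form
  have hΦ : HasDerivAt
      (fun b => f b * (∑ i, u i ^ 2) +
        (f b - 1) * b * (∑ i, u i * (Real.sqrt (μ i - b))⁻¹) ^ 2)
      (f' * (∑ i, u i ^ 2) + 0) β :=
    (hf'.mul_const _).add hφ
  have hQ : HasDerivAt (fun b => ∑ i, (∑ j, C b i j * u j) * u i)
      (∑ i, (∑ j, C' i j * u j) * u i) β :=
    HasDerivAt.fun_sum fun i _ =>
      (HasDerivAt.fun_sum fun j _ => (hC' i j).mul_const (u j)).mul_const (u i)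
  have hev : (fun b => ∑ i, (∑ j, C b i j * u j) * u i) =ᶠ[nhds β]
      (fun b => f b * (∑ i, u i ^ 2) +
        (f b - 1) * b * (∑ i, u i * (Real.sqrt (μ i - b))⁻¹) ^ 2) := by
    filter_upwards [hI] with b hb
    have key : ∀ i, ∑ j, C b i j * u j =
        f b * u i + ((f b - 1) * b * (Real.sqrt (μ i - b))⁻¹) *
          (∑ j, u j * (Real.sqrt (μ j - b))⁻¹) := by
      intro i
      have : ∀ j, C b i j * u j = (if i = j then f b * u j else 0) +
          ((f b - 1) * b * (Real.sqrt (μ i - b))⁻¹) *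
            (u j * (Real.sqrt (μ j - b))⁻¹) := by
        intro j
        rw [hCfor b hb i j]
        by_cases h : i = j <;> simp [h] <;> ring
      rw [Finset.sum_congr rfl fun j _ => this j, Finset.sum_add_distrib,
        Finset.sum_ite_eq, ← Finset.mul_sum]
      simp
    calc ∑ i, (∑ j, C b i j * u j) * u i
        = ∑ i, (f b * u i ^ 2 +
            ((f b - 1) * b * (∑ j, u j * (Real.sqrt (μ j - b))⁻¹)) *
              (u i * (Real.sqrt (μ i - b))⁻¹)) := by
          refine Finset.sum_congr rfl fun i _ => ?_
          rw [key i]; ring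
      _ = f b * (∑ i, u i ^ 2) +
          (f b - 1) * b * (∑ i, u i * (Real.sqrt (μ i - b))⁻¹) ^ 2 := by
          rw [Finset.sum_add_distrib, ← Finset.mul_sum, ← Finset.mul_sum]
          ring
  have hQ2 : HasDerivAt (fun b => ∑ i, (∑ j, C b i j * u j) * u i)
      (f' * (∑ i, u i ^ 2) + 0) β := hΦ.congr_of_eventuallyEq hev
  have hfin := hQ.unique hQ2
  simp only [Matrix.mulVec, dotProduct]
  rw [hfin]
  ring
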